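/- arXiv:1807.07867 — 3 statements merged into one kernel-verified Lean document; each statement's English description precedes it below -/
import Mathlib

section
/- For every λ > -1 and every μ ∈ ℂ, the series Σ_{n=0}^∞ z^n / (n! Γ(λn + μ)) converges absolutely for every complex number z; hence the Wright function W_{λ,μ}(z) := Σ_{n=0}^∞ z^n / (n! Γ(λn + μ)) is a well-defined entire function on ℂ. -/
open Complex Filter Real Topology


lemma norm_sin_le' (w : ℂ) : ‖Complex.sin w‖ ≤ Real.exp |w.im| := by
  rw [Complex.sin, norm_div, norm_mul, Complex.norm_I, mul_one]
  have h1 : ‖cexp (-w * I) - cexp (w * I)‖ ≤ ‖cexp (-w * I)‖ + ‖cexp (w * I)‖ :=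
    norm_sub_le _ _
  have e1 : ‖cexp (-w * I)‖ = Real.exp w.im := by
    rw [Complex.norm_exp]; congr 1; simp
  have e2 : ‖cexp (w * I)‖ = Real.exp (-w.im) := by
    rw [Complex.norm_exp]; congr 1; simp
  have : ‖(2 : ℂ)‖ = 2 := by norm_num
  rw [this, div_le_iff₀ (by norm_num : (0:ℝ) < 2)]
  have b1 : Real.exp w.im ≤ Real.exp |w.im| := Real.exp_le_exp.2 (le_abs_self _)
  have b2 : Real.exp (-w.im) ≤ Real.exp |w.im| := Real.exp_le_exp.2 (neg_le_abs _)
  calc ‖cexp (-w * I) - cexp (w * I)‖ ≤ ‖cexp (-w * I)‖ + ‖cexp (w * I)‖ := h1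
    _ ≤ Real.exp |w.im| + Real.exp |w.im| := by rw [e1, e2]; exact add_le_add b1 b2
    _ = Real.exp |w.im| * 2 := by ring

lemma norm_Gamma_le' {s : ℂ} (hs : 0 < s.re) : ‖Complex.Gamma s‖ ≤ Real.Gamma s.re := by
  rw [Complex.Gamma_eq_integral hs, Real.Gamma_eq_integral hs, Complex.GammaIntegral]
  refine (MeasureTheory.norm_integral_le_of_norm_le (Real.GammaIntegral_convergent hs) ?_)
  refine (MeasureTheory.ae_restrict_iff' measurableSet_Ioi).mpr ?_
  filter_upwards with x hx
  rw [norm_mul, Complex.norm_real,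
    Complex.norm_cpow_eq_rpow_re_of_pos hx]
  simp [_root_.abs_of_nonneg (Real.exp_pos (-x)).le, Complex.sub_re]

lemma Gamma_add_le' {x a : ℝ} (hx : 1 ≤ x) (ha : 0 ≤ a) (ha1 : a ≤ 1) :
    Real.Gamma (x + a) ≤ Real.Gamma x * x ^ a := by
  have hx0 : (0:ℝ) < x := lt_of_lt_of_le one_pos hx
  have hxa : (0:ℝ) < x + a := by linarith
  have hmem : x ∈ Set.Ioi (0:ℝ) := hx0
  have hmem1 : x + 1 ∈ Set.Ioi (0:ℝ) := by simp; linarith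
  have hc := Real.convexOn_log_Gamma.2 hmem hmem1 (by linarith : (0:ℝ) ≤ 1 - a) ha (by ring)
  simp only [smul_eq_mul, Function.comp_apply] at hc
  have hpt : (1 - a) * x + a * (x + 1) = x + a := by ring
  rw [hpt] at hc
  have hG1 : Real.Gamma (x + 1) = x * Real.Gamma x := Real.Gamma_add_one hx0.ne'
  have hGpos : 0 < Real.Gamma x := Real.Gamma_pos_of_pos hx0
  have hGapos : 0 < Real.Gamma (x + a) := Real.Gamma_pos_of_pos hxa
  have hrhs : (1 - a) * Real.log (Real.Gamma x) + a * Real.log (Real.Gamma (x + 1))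
      = Real.log (Real.Gamma x) + a * Real.log x := by
    rw [hG1, Real.log_mul hx0.ne' hGpos.ne']; ring
  rw [hrhs] at hc
  have := Real.exp_le_exp.2 hc
  rw [Real.exp_log hGapos, Real.exp_add, Real.exp_log hGpos] at this
  rwa [Real.rpow_def_of_pos hx0 a, mul_comm (Real.log x) a]


lemma gamma_lower' (y : ℝ) : ∃ c > 0, ∀ s : ℂ, s.im = y → 1 ≤ s.re → c ≤ ‖Complex.Gamma s‖ := by
  have hne : ∀ x : ℝ, 0 < x → ∀ m : ℕ, (x : ℂ) + ↑y * Complex.I ≠ -m := by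
    intro x hx m h
    have hre := congrArg Complex.re h
    simp at hre
    simp only [hre] at hx
    have : (0:ℝ) ≤ (m:ℝ) := Nat.cast_nonneg m
    linarith
  have hcont : ContinuousOn (fun x : ℝ => ‖Complex.Gamma (↑x + ↑y * Complex.I)‖) (Set.Icc 1 2) := by
    intro x hx
    have h1 : ContinuousAt (fun x : ℝ => (↑x + ↑y * Complex.I : ℂ)) x := by fun_prop
    have h2 : ContinuousAt Complex.Gamma ((x:ℂ) + ↑y * Complex.I) :=
      (Complex.differentiableAt_Gamma _ (hne x (lt_of_lt_of_le one_pos hx.1))).continuousAt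
    have h3 : ContinuousAt (fun x : ℝ => Complex.Gamma ((x:ℂ) + ↑y * Complex.I)) x :=
      ContinuousAt.comp h2 h1
    exact (h3.norm).continuousWithinAt
  obtain ⟨x₀, hx₀, hmin⟩ := isCompact_Icc.exists_isMinOn (Set.nonempty_Icc.mpr (by norm_num)) hcont
  set c := ‖Complex.Gamma (↑x₀ + ↑y * Complex.I)‖ with hc
  have hcpos : 0 < c := by
    rw [hc, norm_pos_iff]
    exact Complex.Gamma_ne_zero_of_re_pos (by simp; linarith [hx₀.1])
  refine ⟨c, hcpos, ?_⟩
  have claim : ∀ m : ℕ, ∀ t : ℂ, t.im = y → 1 ≤ t.re → t.re ≤ 2 → c ≤ ‖Complex.Gamma (t + m)‖ := by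
    intro m
    induction m with
    | zero =>
      intro t him h1 h2
      have ht : t = ↑t.re + ↑y * Complex.I := by
        apply Complex.ext <;> simp [him]
      have := hmin (Set.mem_Icc.mpr ⟨h1, h2⟩)
      simp only [Nat.cast_zero, add_zero]
      rw [ht]
      exact this
    | succ m ih =>
      intro t him h1 h2
      have hre : (t + (m:ℂ)).re = t.re + m := by simp
      have hne0 : t + (m:ℂ) ≠ 0 := by
        intro h
        have := congrArg Complex.re h
        rw [hre] at this
        simp at this
        have : (0:ℝ) ≤ (m:ℝ) := Nat.cast_nonneg m
        linarith
      have heq : t + ((m+1 : ℕ) : ℂ) = (t + m) + 1 := by push_cast; ring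
      rw [heq, Complex.Gamma_add_one _ hne0, norm_mul]
      have hnorm : 1 ≤ ‖t + (m:ℂ)‖ := by
        calc (1:ℝ) ≤ |(t + (m:ℂ)).re| := by
              rw [hre, _root_.abs_of_nonneg (by positivity)]
              have : (0:ℝ) ≤ (m:ℝ) := Nat.cast_nonneg m
              linarith
          _ ≤ ‖t + (m:ℂ)‖ := Complex.abs_re_le_norm _
      calc c ≤ ‖Complex.Gamma (t + m)‖ := ih t him h1 h2
        _ = 1 * ‖Complex.Gamma (t + m)‖ := (one_mul _).symm
        _ ≤ ‖t + (m:ℂ)‖ * ‖Complex.Gamma (t + m)‖ :=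
            mul_le_mul_of_nonneg_right hnorm (norm_nonneg _)
  intro s him h1
  set m := ⌊s.re - 1⌋₊ with hm
  have hm1 : (m:ℝ) ≤ s.re - 1 := Nat.floor_le (by linarith)
  have hm2 : s.re - 1 < m + 1 := Nat.lt_floor_add_one _
  have hdecomp : s = (s - m) + m := by ring
  have := claim m (s - m) (by simp [him]) (by simp; linarith) (by simp; linarith)
  rwa [← hdecomp] at this



lemma wright_key (lam : ℝ) (hlam : -1 < lam) (mu : ℂ) (r : ℝ) (hr : 0 < r) :
    Summable (fun n : ℕ =>
      ‖(((n.factorial : ℂ)) * Complex.Gamma ((lam : ℂ) * n + mu))⁻¹‖ * r ^ n) := by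
  rcases lt_trichotomy lam 0 with hneg | hzero | hpos
  · -- case -1 < lam < 0
    set al := -lam with hal_def
    have hal : 0 < al := by simp [hal_def]; linarith
    have hal1 : al < 1 := by simp [hal_def]; linarith
    set d := 1 - mu.re with hd_def
    set B := Real.exp (Real.pi * |mu.im|) / Real.pi with hB_def
    have hBpos : 0 < B := by positivity
    set g : ℕ → ℝ := fun k => B * (Real.Gamma (al * k + d) * (r ^ k / k.factorial)) with hg_def
    -- N such that arguments are ≥ 1
    obtain ⟨N₀, hN₀⟩ := exists_nat_ge ((1 - d) / al)
    have hN : ∀ n : ℕ, N₀ ≤ n → 1 ≤ al * n + d := by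
      intro n hn
      have : (1 - d) / al ≤ (n : ℝ) := le_trans hN₀ (by exact_mod_cast hn)
      rw [div_le_iff₀ hal] at this
      linarith [mul_comm al (n:ℝ)]
    -- summability of g by ratio test
    have hg : Summable g := by
      refine summable_of_ratio_norm_eventually_le (by norm_num : (1:ℝ)/2 < 1) ?_
      have E1 : ∀ᶠ n : ℕ in atTop, 1 ≤ al * n + d := eventually_atTop.mpr ⟨N₀, hN⟩
      have E2 : ∀ᶠ n : ℕ in atTop, al * n + d ≤ n := by
        obtain ⟨M, hM⟩ := exists_nat_ge (d / (1 - al))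
        refine eventually_atTop.mpr ⟨M, fun n hn => ?_⟩
        have h1 : d / (1 - al) ≤ (n : ℝ) := le_trans hM (by exact_mod_cast hn)
        rw [div_le_iff₀ (by linarith : (0:ℝ) < 1 - al)] at h1
        nlinarith
      have E3 : ∀ᶠ n : ℕ in atTop, r * (n : ℝ) ^ (al - 1) ≤ 1/2 := by
        have ht : Tendsto (fun n : ℕ => r * (n : ℝ) ^ (al - 1)) atTop (𝓝 (r * 0)) := by
          apply Tendsto.const_mul
          have := (tendsto_rpow_neg_atTop (by linarith : (0:ℝ) < 1 - al)).comp
            (tendsto_natCast_atTop_atTop (R := ℝ))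
          simpa [neg_sub, Function.comp_def] using this
        rw [mul_zero] at ht
        exact (ht.eventually_lt_const (by norm_num : (0:ℝ) < 1/2)).mono fun n h => h.le
      filter_upwards [E1, E2, E3, eventually_ge_atTop 1] with n h1 h2 h3 hn1
      have hn0 : (0:ℝ) < n := by exact_mod_cast hn1
      set x := al * n + d with hx_def
      have hx0 : 0 < x := by linarith
      have hΓx : 0 < Real.Gamma x := Real.Gamma_pos_of_pos hx0
      have hΓxa : 0 < Real.Gamma (x + al) := Real.Gamma_pos_of_pos (by linarith)
      have hGa : Real.Gamma (x + al) ≤ Real.Gamma x * x ^ al := Gamma_add_le' h1 hal.le hal1.le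
      have harg : al * ((n:ℕ)+1 : ℕ) + d = x + al := by push_cast; ring
      have hgn1 : g (n+1) = B * (Real.Gamma (x + al) * (r ^ (n+1) / (n+1).factorial)) := by
        rw [hg_def]; simp only; rw [harg]
      have hgpos : 0 ≤ g n := by
        rw [hg_def]; positivity
      have hgpos1 : 0 ≤ g (n+1) := by
        rw [hgn1]; positivity
      rw [Real.norm_of_nonneg hgpos1, Real.norm_of_nonneg hgpos]
      have hfact : ((n+1).factorial : ℝ) = (n+1) * n.factorial := by
        rw [Nat.factorial_succ]; push_cast; ring
      have hratio : r * x ^ al / (n + 1) ≤ 1/2 := by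
        have hxn : x ^ al ≤ (n:ℝ) ^ al := Real.rpow_le_rpow hx0.le h2 hal.le
        have : r * x ^ al / ((n:ℝ) + 1) ≤ r * (n:ℝ) ^ al / (n:ℝ) := by
          gcongr
          · linarith
        calc r * x ^ al / ((n:ℝ)+1) ≤ r * (n:ℝ) ^ al / (n:ℝ) := this
          _ = r * (n:ℝ) ^ (al - 1) := by
              rw [Real.rpow_sub hn0, Real.rpow_one]; ring
          _ ≤ 1/2 := h3
      calc g (n+1) = B * (Real.Gamma (x + al) * (r ^ (n+1) / (n+1).factorial)) := hgn1
        _ ≤ B * ((Real.Gamma x * x ^ al) * (r ^ (n+1) / (n+1).factorial)) := by gcongr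
        _ = (r * x ^ al / (n+1)) * g n := by
            rw [hg_def]; simp only; rw [hfact, ← hx_def]; field_simp; ring
        _ ≤ (1/2) * g n := by
            apply mul_le_mul_of_nonneg_right hratio hgpos
    -- comparison
    rw [← summable_nat_add_iff N₀]
    refine Summable.of_nonneg_of_le (fun n => by positivity) (fun n => ?_)
      ((summable_nat_add_iff N₀).mpr hg)
    set k := n + N₀ with hk_def
    set s := (lam : ℂ) * k + mu with hs_def
    have hkN : 1 ≤ al * k + d := hN k (by omega)
    have h1s : (1 - s).re = al * k + d := by
      rw [hs_def]; simp [Complex.sub_re, Complex.add_re, Complex.mul_re]; ring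
    have hΓRd : 0 < Real.Gamma (al * k + d) := Real.Gamma_pos_of_pos (by linarith)
    have hinv : ‖(Complex.Gamma s)⁻¹‖ ≤ B * Real.Gamma (al * k + d) := by
      by_cases hz : Complex.Gamma s = 0
      · rw [hz]; simp; positivity
      · have hΓ1s : Complex.Gamma (1 - s) ≠ 0 :=
          Complex.Gamma_ne_zero_of_re_pos (by rw [h1s]; linarith)
        have hrefl := Complex.Gamma_mul_Gamma_one_sub s
        have hsin : Complex.sin ((Real.pi : ℂ) * s) ≠ 0 := by
          intro h0
          rw [h0, div_zero] at hrefl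
          exact (mul_ne_zero hz hΓ1s) hrefl
        have hπ : ((Real.pi : ℝ) : ℂ) ≠ 0 := by exact_mod_cast Real.pi_ne_zero
        have hid : (Complex.Gamma s)⁻¹ =
            Complex.Gamma (1 - s) * Complex.sin ((Real.pi : ℂ) * s) / (Real.pi : ℂ) := by
          rw [eq_div_iff hsin] at hrefl
          field_simp
          rw [mul_comm s (Real.pi : ℂ)]
          linear_combination -hrefl
        rw [hid, norm_div, norm_mul]
        have hnπ : ‖((Real.pi : ℝ) : ℂ)‖ = Real.pi := by
          rw [Complex.norm_real]; exact abs_of_pos Real.pi_pos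
        have hb1 : ‖Complex.Gamma (1 - s)‖ ≤ Real.Gamma (al * k + d) := by
          have := norm_Gamma_le' (s := 1 - s) (by rw [h1s]; linarith)
          rwa [h1s] at this
        have hb2 : ‖Complex.sin ((Real.pi : ℂ) * s)‖ ≤ Real.exp (Real.pi * |mu.im|) := by
          have him : ((Real.pi : ℂ) * s).im = Real.pi * mu.im := by
            rw [hs_def]; simp [Complex.mul_im, Complex.add_im, Complex.mul_im]
          have := norm_sin_le' ((Real.pi : ℂ) * s)
          rwa [him, abs_mul, abs_of_pos Real.pi_pos] at this
        rw [hnπ]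
        calc ‖Complex.Gamma (1 - s)‖ * ‖Complex.sin ((Real.pi : ℂ) * s)‖ / Real.pi
            ≤ (Real.Gamma (al * k + d) * Real.exp (Real.pi * |mu.im|)) / Real.pi := by
              gcongr
          _ = B * Real.Gamma (al * k + d) := by rw [hB_def]; ring
    have hnormfact : ‖((k.factorial : ℂ) * Complex.Gamma s)⁻¹‖
        = ((k.factorial : ℝ))⁻¹ * ‖(Complex.Gamma s)⁻¹‖ := by
      rw [mul_inv, norm_mul, norm_inv, norm_inv]
      norm_num
    show ‖((k.factorial : ℂ) * Complex.Gamma ((lam : ℂ) * (k : ℕ) + mu))⁻¹‖ * r ^ k ≤ g k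
    calc ‖((k.factorial : ℂ) * Complex.Gamma s)⁻¹‖ * r ^ k
        = ‖(Complex.Gamma s)⁻¹‖ * (r ^ k / k.factorial) := by rw [hnormfact]; ring
      _ ≤ (B * Real.Gamma (al * k + d)) * (r ^ k / k.factorial) := by
          apply mul_le_mul_of_nonneg_right hinv (by positivity)
      _ = g k := by rw [hg_def]; ring
  · -- case lam = 0
    subst hzero
    have : ∀ n : ℕ, ‖(((n.factorial : ℂ)) * Complex.Gamma ((0 : ℝ) * n + mu))⁻¹‖ * r ^ n
        = ‖(Complex.Gamma mu)⁻¹‖ * (r ^ n / n.factorial) := by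
      intro n
      have : ((0:ℝ) : ℂ) * n + mu = mu := by simp
      rw [this, mul_inv, norm_mul, norm_inv, norm_inv]
      norm_num
      ring
    exact (((Real.summable_pow_div_factorial r).mul_left _).congr fun n => (this n).symm)
  · -- case lam > 0
    obtain ⟨c, hc, hG⟩ := gamma_lower' mu.im
    obtain ⟨N₀, hN₀⟩ := exists_nat_ge ((1 - mu.re) / lam)
    have hN : ∀ n : ℕ, N₀ ≤ n → 1 ≤ lam * n + mu.re := by
      intro n hn
      have : (1 - mu.re) / lam ≤ (n : ℝ) := le_trans hN₀ (by exact_mod_cast hn)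
      rw [div_le_iff₀ hpos] at this
      linarith [mul_comm lam (n:ℝ)]
    rw [← summable_nat_add_iff N₀]
    refine Summable.of_nonneg_of_le (fun n => by positivity) (fun n => ?_)
      ((summable_nat_add_iff N₀).mpr ((Real.summable_pow_div_factorial r).mul_left c⁻¹))
    set k := n + N₀ with hk_def
    set s := (lam : ℂ) * k + mu with hs_def
    have hsre : s.re = lam * k + mu.re := by
      rw [hs_def]; simp [Complex.add_re, Complex.mul_re]
    have hsim : s.im = mu.im := by
      rw [hs_def]; simp [Complex.add_im, Complex.mul_im]
    have hGs : c ≤ ‖Complex.Gamma s‖ := hG s hsim (by rw [hsre]; exact hN k (by omega))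
    have hnormfact : ‖((k.factorial : ℂ) * Complex.Gamma s)⁻¹‖
        = ((k.factorial : ℝ))⁻¹ * ‖(Complex.Gamma s)⁻¹‖ := by
      rw [mul_inv, norm_mul, norm_inv, norm_inv]
      norm_num
    have hinv : ‖(Complex.Gamma s)⁻¹‖ ≤ c⁻¹ := by
      rw [norm_inv]
      exact inv_anti₀ hc hGs
    show ‖((k.factorial : ℂ) * Complex.Gamma ((lam : ℂ) * (k : ℕ) + mu))⁻¹‖ * r ^ k
        ≤ c⁻¹ * (r ^ k / k.factorial)
    calc ‖((k.factorial : ℂ) * Complex.Gamma s)⁻¹‖ * r ^ k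
        = ‖(Complex.Gamma s)⁻¹‖ * (r ^ k / k.factorial) := by rw [hnormfact]; ring
      _ ≤ c⁻¹ * (r ^ k / k.factorial) := by
          apply mul_le_mul_of_nonneg_right hinv (by positivity)


/-- For `λ > -1` and `μ ∈ ℂ`, the Wright series `∑ zⁿ / (n! Γ(λn + μ))` converges absolutely
for every `z ∈ ℂ`, and the Wright function `W_{λ,μ}` is entire.  (With the convention
`1/Γ = 0` at the poles of `Γ`, which holds for Mathlib's `Complex.Gamma` since it
vanishes at the nonpositive integers.) -/
theorem wright_summable_and_entire (lam : ℝ) (hlam : -1 < lam) (mu : ℂ) :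
    (∀ z : ℂ, Summable fun n : ℕ =>
        ‖z ^ n / ((n.factorial : ℂ) * Complex.Gamma ((lam : ℂ) * n + mu))‖) ∧
    Differentiable ℂ (fun z : ℂ =>
        ∑' n : ℕ, z ^ n / ((n.factorial : ℂ) * Complex.Gamma ((lam : ℂ) * n + mu))) := by
  set cf : ℕ → ℂ := fun n => ((n.factorial : ℂ) * Complex.Gamma ((lam : ℂ) * n + mu))⁻¹ with hcf
  have key0 : ∀ r : ℝ, 0 ≤ r → Summable (fun n : ℕ => ‖cf n‖ * r ^ n) := by
    intro r hr0
    refine Summable.of_nonneg_of_le (fun n => by positivity) (fun n => ?_)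
      (wright_key lam hlam mu (r + 1) (by linarith))
    have : r ^ n ≤ (r + 1) ^ n := pow_le_pow_left₀ hr0 (by linarith) n
    exact mul_le_mul_of_nonneg_left this (norm_nonneg _)
  have hsum : ∀ z : ℂ, Summable fun n : ℕ =>
      ‖z ^ n / ((n.factorial : ℂ) * Complex.Gamma ((lam : ℂ) * n + mu))‖ := by
    intro z
    refine ((key0 ‖z‖ (norm_nonneg z)).congr fun n => ?_)
    rw [div_eq_mul_inv, norm_mul, norm_pow, mul_comm]
  refine ⟨hsum, ?_⟩
  set p := FormalMultilinearSeries.ofScalars ℂ cf with hp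
  have hrad : p.radius = ⊤ := by
    refine FormalMultilinearSeries.radius_eq_top_of_summable_norm _ fun r => ?_
    refine ((key0 r r.coe_nonneg).congr fun n => ?_)
    rw [hp, FormalMultilinearSeries.ofScalars_norm]
  have hball := p.hasFPowerSeriesOnBall (by rw [hrad]; exact ENNReal.zero_lt_top)
  have hdiff : Differentiable ℂ p.sum := by
    intro z
    have hmem : z ∈ EMetric.ball (0 : ℂ) p.radius := by
      rw [hrad]; exact edist_lt_top z 0
    exact (hball.differentiableOn.differentiableAt
      (EMetric.isOpen_ball.mem_nhds hmem))
  have heq : (fun z : ℂ =>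
      ∑' n : ℕ, z ^ n / ((n.factorial : ℂ) * Complex.Gamma ((lam : ℂ) * n + mu))) = p.sum := by
    funext z
    rw [FormalMultilinearSeries.sum]
    refine tsum_congr fun n => ?_
    rw [hp, FormalMultilinearSeries.ofScalars_apply_eq, smul_eq_mul, div_eq_mul_inv, mul_comm]
  rw [heq]
  exact hdiff
end

section
/- For every z ∈ ℂ, the M-Wright function of order 1/2 satisfies M_{1/2}(z) = (1/√π) · exp(−z²/4). -/
lemma gamma_half_sub_nat (k : ℕ) :
    Complex.Gamma (1 / 2 - k) =
      (-4 : ℂ) ^ k * k.factorial * Real.sqrt Real.pi / (2 * k).factorial := by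
  induction k with
  | zero =>
      simp only [Nat.cast_zero, sub_zero, Nat.factorial, mul_zero, pow_zero, one_mul,
        Nat.cast_one, div_one]
      rw [Complex.Gamma_one_half_eq, show (1/2 : ℂ) = ((1/2 : ℝ) : ℂ) by norm_num,
        ← Complex.ofReal_cpow Real.pi_pos.le]
      simp [Real.sqrt_eq_rpow]
  | succ n ih =>
      have hne : (1 / 2 : ℂ) - (n + 1 : ℕ) ≠ 0 := by
        intro h
        have := congrArg Complex.re h
        simp [Complex.sub_re, Complex.div_re] at this
        nlinarith [this]
      have h1 : (1 / 2 : ℂ) - (n + 1 : ℕ) + 1 = 1 / 2 - n := by push_cast; ring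
      have h2 := Complex.Gamma_add_one _ hne
      rw [h1, ih] at h2
      have hfac : ((2 * (n + 1)).factorial : ℂ) =
          (2 * n + 2) * (2 * n + 1) * (2 * n).factorial := by
        have : 2 * (n + 1) = (2 * n + 1) + 1 := by ring
        rw [this, Nat.factorial_succ, Nat.factorial_succ]
        push_cast; ring
      have hfacn : ((2 * n).factorial : ℂ) ≠ 0 := by
        exact_mod_cast Nat.cast_ne_zero.mpr (Nat.factorial_ne_zero _)
      rw [div_eq_iff hfacn] at h2
      have hG : Complex.Gamma (1 / 2 - ((n + 1 : ℕ) : ℂ)) =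
          (-4 : ℂ) ^ n * n.factorial * Real.sqrt Real.pi /
            ((1 / 2 - ((n + 1 : ℕ) : ℂ)) * (2 * n).factorial) := by
        rw [eq_div_iff (mul_ne_zero hne hfacn)]
        linear_combination -h2
      have h2n1 : (2 * (n : ℂ) + 1) ≠ 0 := by
        have : (2 * (n : ℂ) + 1) = ((2 * n + 1 : ℕ) : ℂ) := by push_cast; ring
        rw [this]
        exact Nat.cast_ne_zero.mpr (Nat.succ_ne_zero _)
      have h2n2 : (2 * (n : ℂ) + 2) ≠ 0 := by
        have : (2 * (n : ℂ) + 2) = ((2 * n + 2 : ℕ) : ℂ) := by push_cast; ring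
        rw [this]
        exact Nat.cast_ne_zero.mpr (Nat.succ_ne_zero _)
      rw [hG, Nat.factorial_succ, hfac,
        div_eq_div_iff (mul_ne_zero hne hfacn)
          (mul_ne_zero (mul_ne_zero h2n2 h2n1) hfacn)]
      push_cast
      ring

/-- The M-Wright function of order `1/2`, given by the series
`M_{1/2}(z) = ∑ (-z)ⁿ / (n! Γ(-n/2 + 1 - 1/2))`, equals `(1/√π) exp(-z²/4)`. -/
theorem mWright_half_eq_gaussian (z : ℂ) :
    ∑' n : ℕ, (-z) ^ n /
        ((n.factorial : ℂ) * Complex.Gamma (-(1 / 2 : ℂ) * n + 1 - 1 / 2)) =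
      (1 / Real.sqrt Real.pi : ℝ) * Complex.exp (-z ^ 2 / 4) := by
  set f : ℕ → ℂ := fun n =>
    (-z) ^ n / ((n.factorial : ℂ) * Complex.Gamma (-(1 / 2 : ℂ) * n + 1 - 1 / 2)) with hf
  have hsqrt : ((Real.sqrt Real.pi : ℝ) : ℂ) ≠ 0 := by
    exact_mod_cast Real.sqrt_ne_zero'.mpr Real.pi_pos
  -- exp series
  have hexp : HasSum (fun k : ℕ => (-z ^ 2 / 4) ^ k / (k.factorial : ℂ))
      (Complex.exp (-z ^ 2 / 4)) := by
    rw [Complex.exp_eq_exp_ℂ, NormedSpace.exp_eq_tsum_div]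
    exact (NormedSpace.expSeries_div_summable (-z ^ 2 / 4)).hasSum
  have heven : HasSum (fun k : ℕ => f (2 * k))
      ((1 / Real.sqrt Real.pi : ℝ) * Complex.exp (-z ^ 2 / 4)) := by
    have hfun : (fun k : ℕ => f (2 * k)) =
        fun k : ℕ => ((1 / Real.sqrt Real.pi : ℝ) : ℂ) * ((-z ^ 2 / 4) ^ k / (k.factorial : ℂ)) := by
      funext k
      have harg : -(1 / 2 : ℂ) * ((2 * k : ℕ) : ℂ) + 1 - 1 / 2 = 1 / 2 - k := by
        push_cast; ring
      simp only [hf, harg, gamma_half_sub_nat]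
      have hk : ((k.factorial : ℕ) : ℂ) ≠ 0 := by
        exact_mod_cast Nat.cast_ne_zero.mpr (Nat.factorial_ne_zero _)
      have h2k : (((2 * k).factorial : ℕ) : ℂ) ≠ 0 := by
        exact_mod_cast Nat.cast_ne_zero.mpr (Nat.factorial_ne_zero _)
      have h4 : ((-4 : ℂ)) ^ k ≠ 0 := pow_ne_zero _ (by norm_num)
      have hzpow : (-z) ^ (2 * k) = (z ^ 2) ^ k := by
        rw [pow_mul]; ring_nf
      rw [hzpow]
      have hm : ((-4 : ℂ)) ^ k * (-1) ^ k = 4 ^ k := by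
        rw [← mul_pow]; norm_num
      push_cast
      field_simp
      have hq : ((-4 : ℂ)) ^ k * (-1 / 4) ^ k = 1 := by rw [← mul_pow]; norm_num
      linear_combination (-(z ^ (k * 2))) * hq
    rw [hfun]
    exact (hexp.mul_left _)
  have hodd : HasSum (fun k : ℕ => f (2 * k + 1)) 0 := by
    have hfun : (fun k : ℕ => f (2 * k + 1)) = fun _ : ℕ => (0 : ℂ) := by
      funext k
      have harg : -(1 / 2 : ℂ) * ((2 * k + 1 : ℕ) : ℂ) + 1 - 1 / 2 = -(k : ℂ) := by
        push_cast; ring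
      simp only [hf, harg, Complex.Gamma_neg_nat_eq_zero, mul_zero, div_zero]
    rw [hfun]
    exact hasSum_zero
  have := heven.even_add_odd hodd
  rw [add_zero] at this
  exact this.tsum_eq
end

section
/- Let d ∈ ℕ, 0 < β ≤ 1, and let μ be a Borel probability measure on S'_d such that ∫_{S'_d} e^{i⟨w,φ⟩₀} dμ(w) = E_β(−|φ|₀²/2) for all φ ∈ S_d. Then for all φ, ψ ∈ S_d, ∫_{S'_d} ⟨w,φ⟩₀ ⟨w,ψ⟩₀ dμ(w) = (1/Γ(β+1)) · ⟨φ,ψ⟩₀. -/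
open MeasureTheory Set Filter

/-- Borel σ-algebra on the space `S'(ℝ)` of tempered distributions (continuous linear
functionals on the Schwartz space, with the strong topology). -/
noncomputable instance : MeasurableSpace (SchwartzMap ℝ ℝ →L[ℝ] ℝ) := borel _

/-- The dual pairing `⟨w, φ⟩₀ = ∑ₖ ⟨wₖ, φₖ⟩` between `S'_d` and `S_d`. -/
noncomputable def pairing {d : ℕ} (w : Fin d → (SchwartzMap ℝ ℝ →L[ℝ] ℝ))
    (φ : Fin d → SchwartzMap ℝ ℝ) : ℝ :=
  ∑ k, w k (φ k)

/-- The scalar product `⟨φ, ψ⟩₀ = ∑ₖ ∫ φₖ(x) ψₖ(x) dx` on `S_d`. -/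
noncomputable def innerL2 {d : ℕ} (φ ψ : Fin d → SchwartzMap ℝ ℝ) : ℝ :=
  ∑ k, ∫ x : ℝ, φ k x * ψ k x

/-- The Mittag-Leffler function `E_β(x) = ∑ xⁿ / Γ(βn + 1)` (real argument). -/
noncomputable def mittagLeffler (β x : ℝ) : ℝ :=
  ∑' n : ℕ, x ^ n / Real.Gamma (β * n + 1)

lemma gamma_lb (y : ℝ) (hy : 1 ≤ y) : Real.exp (-3) * 2 ^ (y-1) ≤ Real.Gamma y := by
  have hy0 : 0 < y := by linarith
  rw [Real.Gamma_eq_integral hy0]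
  have hint : IntegrableOn (fun x => Real.exp (-x) * x ^ (y-1)) (Ioi (0:ℝ)) :=
    Real.GammaIntegral_convergent hy0
  have h1 : Real.exp (-3) * 2 ^ (y-1) * (volume (Ioc (2:ℝ) 3)).toReal
      ≤ ∫ x in Ioc (2:ℝ) 3, Real.exp (-x) * x ^ (y-1) := by
    apply setIntegral_ge_of_const_le_real measurableSet_Ioc
    · simp [Real.volume_Ioc]
    · intro x hx
      have hx2 : (2:ℝ) ≤ x := le_of_lt hx.1
      have hx3 : x ≤ 3 := hx.2
      have : Real.exp (-3) ≤ Real.exp (-x) := Real.exp_le_exp.2 (by linarith)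
      have h2 : (2:ℝ) ^ (y-1) ≤ x ^ (y-1) :=
        Real.rpow_le_rpow (by norm_num) hx2 (by linarith)
      nlinarith [Real.exp_pos (-3), Real.rpow_nonneg (show (0:ℝ) ≤ 2 by norm_num) (y-1)]
    · exact hint.mono_set (fun x hx => lt_of_lt_of_le (by norm_num) hx.1.le)
  have h2 : ∫ x in Ioc (2:ℝ) 3, Real.exp (-x) * x ^ (y-1)
      ≤ ∫ x in Ioi (0:ℝ), Real.exp (-x) * x ^ (y-1) := by
    apply setIntegral_mono_set hint
    · filter_upwards [ae_restrict_mem measurableSet_Ioi] with x hx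
      have : (0:ℝ) < x := hx
      positivity
    · apply Filter.Eventually.of_forall
      intro x hx; exact lt_of_lt_of_le (by norm_num) hx.1.le
  have hvol : (volume (Ioc (2:ℝ) 3)).toReal = 1 := by
    simp [Real.volume_Ioc]; norm_num
  rw [hvol, mul_one] at h1
  linarith

lemma gamma_term_lb {β : ℝ} (hβ0 : 0 < β) (n : ℕ) :
    Real.exp (-3) * ((2:ℝ)^β)^n ≤ Real.Gamma (β*n+1) := by
  have hn : (0:ℝ) ≤ (n:ℝ) := Nat.cast_nonneg n
  have h := gamma_lb (β*n+1) (by nlinarith)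
  have : (2:ℝ) ^ (β*n+1-1) = ((2:ℝ)^β)^n := by
    rw [show β*(n:ℝ)+1-1 = β*n by ring, Real.rpow_mul (by norm_num), Real.rpow_natCast]
  rwa [this] at h

lemma gamma_term_lb' {β : ℝ} (hβ0 : 0 < β) (n : ℕ) :
    Real.exp (-3) ≤ Real.Gamma (β*n+1) := by
  have h2b : (1:ℝ) ≤ (2:ℝ)^β := Real.one_le_rpow (by norm_num) hβ0.le
  have := gamma_term_lb hβ0 n
  have h1 : (1:ℝ) ≤ ((2:ℝ)^β)^n := one_le_pow₀ h2b
  nlinarith [Real.exp_pos (-3)]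

lemma gamma_arg_pos {β : ℝ} (hβ0 : 0 < β) {t : ℝ} (ht : 0 ≤ t) : (0:ℝ) < β*t+1 := by
  nlinarith

lemma term_bound {β x : ℝ} (hβ0 : 0 < β) (hx : |x| ≤ 1/2) (n : ℕ) :
    |x ^ n / Real.Gamma (β*n+1)| ≤ Real.exp 3 * (1/2)^n := by
  have hg := gamma_term_lb' hβ0 n
  have hgpos : 0 < Real.Gamma (β*n+1) :=
    Real.Gamma_pos_of_pos (gamma_arg_pos hβ0 (Nat.cast_nonneg n))
  rw [abs_div, abs_of_pos hgpos, abs_pow, div_le_iff₀ hgpos]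
  have h1 : |x|^n ≤ (1/2)^n := pow_le_pow_left₀ (abs_nonneg x) hx n
  have h2 : Real.exp 3 * Real.exp (-3) = 1 := by rw [← Real.exp_add]; norm_num
  nlinarith [Real.exp_pos 3, pow_pos (show (0:ℝ) < 1/2 by norm_num) n,
    mul_le_mul_of_nonneg_left hg (le_of_lt (mul_pos (Real.exp_pos 3)
      (pow_pos (show (0:ℝ) < 1/2 by norm_num) n)))]

lemma ml_summable {β x : ℝ} (hβ0 : 0 < β) (hx : |x| ≤ 1/2) :
    Summable (fun n : ℕ => x ^ n / Real.Gamma (β*n+1)) := by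
  apply Summable.of_norm
  apply Summable.of_nonneg_of_le (fun n => norm_nonneg _) (fun n => term_bound hβ0 hx n)
  exact (summable_geometric_of_lt_one (by norm_num) (by norm_num)).mul_left _

lemma ml_bound {β x : ℝ} (hβ0 : 0 < β) (hx : |x| ≤ 1/2) :
    |mittagLeffler β x - (1 + x / Real.Gamma (β+1))| ≤ 2 * Real.exp 3 * x^2 := by
  have hsum := ml_summable hβ0 hx
  have hsplit := Summable.sum_add_tsum_nat_add (f := fun n : ℕ => x ^ n / Real.Gamma (β*n+1)) 2 hsum
  have hf0 : ∑ i ∈ Finset.range 2, x ^ i / Real.Gamma (β*i+1)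
      = 1 + x / Real.Gamma (β+1) := by
    simp [Finset.sum_range_succ, Real.Gamma_one]
  have hb : ∀ n : ℕ, |x ^ (n+2) / Real.Gamma (β*(n+2:ℕ)+1)|
      ≤ (x^2 * Real.exp 3) * (1/2)^n := by
    intro n
    have hg := gamma_term_lb' hβ0 (n+2)
    have hgpos : 0 < Real.Gamma (β*((n:ℕ)+2:ℕ)+1) :=
      Real.Gamma_pos_of_pos (gamma_arg_pos hβ0 (Nat.cast_nonneg _))
    rw [abs_div, abs_of_pos hgpos, abs_pow, div_le_iff₀ hgpos]
    have h1 : |x|^n ≤ (1/2)^n := pow_le_pow_left₀ (abs_nonneg x) hx n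
    have h2 : Real.exp 3 * Real.exp (-3) = 1 := by rw [← Real.exp_add]; norm_num
    have h3 : |x|^(n+2) = x^2 * |x|^n := by rw [pow_add, sq_abs]; ring
    have h4 : x^2 * |x|^n ≤ x^2 * (1/2)^n := mul_le_mul_of_nonneg_left h1 (sq_nonneg x)
    have h5 : (0:ℝ) ≤ x^2 * Real.exp 3 * (1/2)^n := by positivity
    calc |x|^(n+2) = x^2 * |x|^n := h3
      _ ≤ x^2 * (1/2)^n := h4
      _ = x^2 * (1/2)^n * (Real.exp 3 * Real.exp (-3)) := by rw [h2, mul_one]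
      _ = (x^2 * Real.exp 3 * (1/2)^n) * Real.exp (-3) := by ring
      _ ≤ (x^2 * Real.exp 3 * (1/2)^n) * Real.Gamma (β*((n:ℕ)+2:ℕ)+1) :=
          mul_le_mul_of_nonneg_left hg h5
  have hsumb : Summable (fun n : ℕ => (x^2 * Real.exp 3) * (1/2:ℝ)^n) :=
    (summable_geometric_of_lt_one (by norm_num) (by norm_num)).mul_left _
  have hsumt : Summable (fun n : ℕ => x ^ (n+2) / Real.Gamma (β*(n+2:ℕ)+1)) :=
    (summable_nat_add_iff (f := fun n : ℕ => x ^ n / Real.Gamma (β*n+1)) 2).2 hsum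
  have htail : |∑' n : ℕ, x ^ (n+2) / Real.Gamma (β*(n+2:ℕ)+1)| ≤ 2 * Real.exp 3 * x^2 := by
    calc |∑' n : ℕ, x ^ (n+2) / Real.Gamma (β*(n+2:ℕ)+1)|
        ≤ ∑' n : ℕ, |x ^ (n+2) / Real.Gamma (β*(n+2:ℕ)+1)| :=
          norm_tsum_le_tsum_norm (f := fun n : ℕ =>
            x ^ (n+2) / Real.Gamma (β*(n+2:ℕ)+1)) hsumt.abs
      _ ≤ ∑' n : ℕ, (x^2 * Real.exp 3) * (1/2:ℝ)^n :=
          Summable.tsum_le_tsum hb hsumt.abs hsumb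
      _ = (x^2 * Real.exp 3) * (1 - 1/2)⁻¹ := by
          rw [tsum_mul_left, tsum_geometric_of_lt_one (by norm_num) (by norm_num)]
      _ = 2 * Real.exp 3 * x^2 := by norm_num; ring
  have heq : mittagLeffler β x - (1 + x / Real.Gamma (β+1))
      = ∑' n : ℕ, x ^ (n+2) / Real.Gamma (β*(n+2:ℕ)+1) := by
    unfold mittagLeffler
    rw [← hsplit, hf0]
    ring
  rw [heq]; exact htail

instance : BorelSpace (SchwartzMap ℝ ℝ →L[ℝ] ℝ) := ⟨rfl⟩

lemma pairing_meas {d : ℕ} (φ : Fin d → SchwartzMap ℝ ℝ) :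
    Measurable (fun w : Fin d → (SchwartzMap ℝ ℝ →L[ℝ] ℝ) => pairing w φ) := by
  unfold pairing
  apply Finset.measurable_sum
  intro k _
  have hcont : Continuous (fun L : SchwartzMap ℝ ℝ →L[ℝ] ℝ => L (φ k)) :=
    continuous_eval_const (φ k)
  exact hcont.measurable.comp (measurable_pi_apply k)

lemma pairing_smul {d : ℕ} (w : Fin d → (SchwartzMap ℝ ℝ →L[ℝ] ℝ))
    (φ : Fin d → SchwartzMap ℝ ℝ) (t : ℝ) :
    pairing w (fun k => t • φ k) = t * pairing w φ := by
  unfold pairing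
  rw [Finset.mul_sum]
  congr 1; ext k
  rw [ContinuousLinearMap.map_smul]; rfl

lemma pairing_add {d : ℕ} (w : Fin d → (SchwartzMap ℝ ℝ →L[ℝ] ℝ))
    (φ ψ : Fin d → SchwartzMap ℝ ℝ) :
    pairing w (fun k => φ k + ψ k) = pairing w φ + pairing w ψ := by
  unfold pairing
  rw [← Finset.sum_add_distrib]
  congr 1; ext k
  rw [map_add]

lemma schwartz_mul_integrable (f g : SchwartzMap ℝ ℝ) :
    Integrable (fun x => f x * g x) := by
  apply (g.integrable (μ := volume)).bdd_mul (c := SchwartzMap.seminorm ℝ 0 0 f) f.continuous.aestronglyMeasurable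
  exact Filter.Eventually.of_forall fun x => by
    simpa using SchwartzMap.norm_le_seminorm ℝ f x

lemma innerL2_nonneg {d : ℕ} (φ : Fin d → SchwartzMap ℝ ℝ) : 0 ≤ innerL2 φ φ := by
  apply Finset.sum_nonneg
  intro k _
  apply integral_nonneg
  intro x; exact mul_self_nonneg _

lemma innerL2_smul {d : ℕ} (φ : Fin d → SchwartzMap ℝ ℝ) (t : ℝ) :
    innerL2 (fun k => t • φ k) (fun k => t • φ k) = t^2 * innerL2 φ φ := by
  unfold innerL2
  rw [Finset.mul_sum]
  congr 1; ext k
  rw [← integral_const_mul]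
  congr 1; ext x
  simp only [SchwartzMap.smul_apply, smul_eq_mul]
  ring

lemma innerL2_polar {d : ℕ} (φ ψ : Fin d → SchwartzMap ℝ ℝ) :
    innerL2 (fun k => φ k + ψ k) (fun k => φ k + ψ k)
      = innerL2 φ φ + 2 * innerL2 φ ψ + innerL2 ψ ψ := by
  unfold innerL2
  rw [Finset.mul_sum, ← Finset.sum_add_distrib, ← Finset.sum_add_distrib]
  congr 1; ext k
  have h1 : ∀ x : ℝ, (φ k + ψ k) x * (φ k + ψ k) x
      = φ k x * φ k x + 2 * (φ k x * ψ k x) + ψ k x * ψ k x := by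
    intro x; rw [SchwartzMap.add_apply]; ring
  rw [integral_congr_ae (Filter.Eventually.of_forall h1)]
  rw [integral_add, integral_add, integral_const_mul]
  · exact schwartz_mul_integrable _ _
  · exact (schwartz_mul_integrable _ _).const_mul 2
  · exact (schwartz_mul_integrable _ _).add ((schwartz_mul_integrable _ _).const_mul 2)
  · exact schwartz_mul_integrable _ _

section
variable {α : Type*} [MeasurableSpace α] (μ : Measure α) [IsProbabilityMeasure μ]

-- second moment from cos-integral convergence
lemma second_moment_aux (X : α → ℝ) (hX : Measurable X) (L : ℝ) (hL : 0 ≤ L)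
    (hcos : Tendsto (fun n : ℕ => 2 * (1 - ∫ w, Real.cos ((1/(n+1:ℝ)) * X w) ∂μ) / (1/(n+1:ℝ))^2)
      atTop (nhds L)) :
    Integrable (fun w => (X w)^2) μ ∧ ∫ w, (X w)^2 ∂μ = L := by
  set t : ℕ → ℝ := fun n => 1/(n+1:ℝ) with ht
  have htpos : ∀ n, 0 < t n := fun n => by positivity
  have hcos_meas : ∀ n, Measurable (fun w => Real.cos (t n * X w)) := fun n =>
    (Real.continuous_cos.measurable).comp ((measurable_const.mul hX))
  -- g n w = 2 (1 - cos(t n * X w)) / (t n)^2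
  set g : ℕ → α → ℝ := fun n w => 2 * (1 - Real.cos (t n * X w)) / (t n)^2 with hg
  have hg_meas : ∀ n, Measurable (g n) := by
    intro n
    apply Measurable.div_const
    exact (measurable_const.sub (hcos_meas n)).const_mul 2
  have hcos_int : ∀ n, Integrable (fun w => Real.cos (t n * X w)) μ := by
    intro n
    apply Integrable.mono' (integrable_const 1) (hcos_meas n).aestronglyMeasurable
    filter_upwards with w
    rw [Real.norm_eq_abs]; exact Real.abs_cos_le_one _
  have hg_int : ∀ n, Integrable (g n) μ := by
    intro n
    simp only [hg, div_eq_mul_inv]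
    exact (((integrable_const 1).sub (hcos_int n)).const_mul 2).mul_const _
  have hg_nonneg : ∀ n w, 0 ≤ g n w := by
    intro n w
    apply div_nonneg _ (sq_nonneg _)
    have := Real.cos_le_one (t n * X w); linarith
  -- 1 - cos u ≤ u^2/2
  have hcosineq : ∀ u : ℝ, 1 - Real.cos u ≤ u^2/2 := by
    intro u
    have h1 : Real.cos u = 1 - 2 * Real.sin (u/2)^2 := by
      nlinarith [Real.cos_sq (u/2), Real.sin_sq_add_cos_sq (u/2),
        show Real.cos (2*(u/2)) = Real.cos u by ring_nf]
    have h3 : |Real.sin (u/2)| ≤ |u/2| := Real.abs_sin_le_abs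
    nlinarith [sq_abs (Real.sin (u/2)), sq_abs (u/2), abs_nonneg (Real.sin (u/2)), abs_nonneg (u/2)]
  have hg_le : ∀ n w, g n w ≤ (X w)^2 := by
    intro n w
    rw [hg, div_le_iff₀ (by positivity : (0:ℝ) < (t n)^2)]
    have := hcosineq (t n * X w)
    nlinarith [sq_nonneg (t n * X w), sq_nonneg (X w), sq_nonneg (t n)]
  -- pointwise convergence g n w → X w ^ 2
  have hg_tendsto : ∀ w, Tendsto (fun n => g n w) atTop (nhds ((X w)^2)) := by
    intro w
    rcases eq_or_ne (X w) 0 with h0 | h0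
    · simp only [hg, h0, mul_zero, Real.cos_zero, sub_self, mul_zero, zero_div]
      simpa [h0] using tendsto_const_nhds
    · have hsin : Tendsto (fun y : ℝ => Real.sin y / y) (nhdsWithin 0 {(0:ℝ)}ᶜ) (nhds 1) := by
        have h := hasDerivAt_iff_tendsto_slope.1 (Real.hasDerivAt_sin 0)
        rw [Real.cos_zero] at h
        apply h.congr'
        filter_upwards with y
        simp [slope_def_field, div_eq_mul_inv]
      set y : ℕ → ℝ := fun n => t n * X w / 2 with hy
      have hyt : Tendsto y atTop (nhdsWithin 0 {(0:ℝ)}ᶜ) := by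
        apply tendsto_nhdsWithin_of_tendsto_nhds_of_eventually_within
        · have : Tendsto t atTop (nhds 0) := tendsto_one_div_add_atTop_nhds_zero_nat
          have := (this.mul_const (X w / 2))
          simpa [ht, hy, mul_div_assoc, one_div] using this
        · filter_upwards with n
          simp only [Set.mem_compl_iff, Set.mem_singleton_iff]
          have := htpos n
          intro hcon
          rw [hy] at hcon
          have : t n * X w = 0 := by linarith [hcon]
          rcases mul_eq_zero.1 this with h | h
          · exact absurd h (ne_of_gt (htpos n))
          · exact h0 h
      have hgeq : ∀ n, g n w = (X w)^2 * (Real.sin (y n) / (y n))^2 := by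
        intro n
        have hyn : y n ≠ 0 := by
          have := htpos n
          simp only [hy]
          intro hcon
          have : t n * X w = 0 := by linarith
          rcases mul_eq_zero.1 this with h | h
          · exact absurd h (ne_of_gt (htpos n))
          · exact h0 h
        have hcos2 : Real.cos (t n * X w) = 1 - 2 * Real.sin (y n)^2 := by
          have h2 : (2:ℝ) * y n = t n * X w := by rw [hy]; ring
          nlinarith [Real.cos_sq (y n), Real.sin_sq_add_cos_sq (y n),
            show Real.cos (2 * y n) = Real.cos (t n * X w) by rw [h2]]
        show (2 * (1 - Real.cos (t n * X w)) / t n ^ 2) = X w ^2 * (Real.sin (y n)/y n)^2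
        rw [hcos2]
        have htn := (htpos n).ne'
        field_simp
        rw [hy]
        field_simp
        ring
      have : Tendsto (fun n => (X w)^2 * (Real.sin (y n) / (y n))^2) atTop
          (nhds ((X w)^2 * 1^2)) :=
        tendsto_const_nhds.mul (((hsin.comp hyt).pow 2))
      simp only [one_pow, mul_one] at this
      exact Tendsto.congr (fun n => (hgeq n).symm) this
  -- integrals of g n converge to L
  have hgint_eq : ∀ n, ∫ w, g n w ∂μ
      = 2 * (1 - ∫ w, Real.cos (t n * X w) ∂μ) / (t n)^2 := by
    intro n
    rw [hg]
    simp only [div_eq_mul_inv]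
    rw [integral_mul_const, integral_const_mul, integral_sub (integrable_const 1) (hcos_int n)]
    simp
  have hgint_tendsto : Tendsto (fun n => ∫ w, g n w ∂μ) atTop (nhds L) := by
    apply Tendsto.congr (fun n => (hgint_eq n).symm)
    exact hcos
  -- Fatou: finite second moment
  have hX2_meas : Measurable (fun w => (X w)^2) := hX.pow_const 2
  have hfatou : ∫⁻ w, ENNReal.ofReal ((X w)^2) ∂μ ≤ ENNReal.ofReal L := by
    have h1 : ∀ w, ENNReal.ofReal ((X w)^2)
        = liminf (fun n => ENNReal.ofReal (g n w)) atTop := by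
      intro w
      exact ((ENNReal.continuous_ofReal.tendsto _).comp (hg_tendsto w)).liminf_eq.symm
    calc ∫⁻ w, ENNReal.ofReal ((X w)^2) ∂μ
        = ∫⁻ w, liminf (fun n => ENNReal.ofReal (g n w)) atTop ∂μ := by
          apply lintegral_congr; intro w; exact h1 w
      _ ≤ liminf (fun n => ∫⁻ w, ENNReal.ofReal (g n w) ∂μ) atTop :=
          lintegral_liminf_le (fun n => (hg_meas n).ennreal_ofReal)
      _ = ENNReal.ofReal L := by
          have h2 : ∀ n, ∫⁻ w, ENNReal.ofReal (g n w) ∂μ = ENNReal.ofReal (∫ w, g n w ∂μ) := by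
            intro n
            rw [← ofReal_integral_eq_lintegral_ofReal (hg_int n)
              (Filter.Eventually.of_forall (hg_nonneg n))]
          simp only [h2]
          exact ((ENNReal.continuous_ofReal.tendsto _).comp hgint_tendsto).liminf_eq
  have hX2_int : Integrable (fun w => (X w)^2) μ := by
    refine ⟨hX2_meas.aestronglyMeasurable, ?_⟩
    rw [hasFiniteIntegral_iff_norm]
    calc ∫⁻ w, ENNReal.ofReal ‖(X w)^2‖ ∂μ
        = ∫⁻ w, ENNReal.ofReal ((X w)^2) ∂μ := by
          apply lintegral_congr; intro w
          rw [Real.norm_eq_abs, abs_of_nonneg (sq_nonneg _)]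
      _ ≤ ENNReal.ofReal L := hfatou
      _ < ⊤ := ENNReal.ofReal_lt_top
  refine ⟨hX2_int, ?_⟩
  -- dominated convergence
  have hdct : Tendsto (fun n => ∫ w, g n w ∂μ) atTop (nhds (∫ w, (X w)^2 ∂μ)) := by
    apply tendsto_integral_of_dominated_convergence (fun w => (X w)^2)
      (fun n => (hg_meas n).aestronglyMeasurable) hX2_int
    · intro n
      filter_upwards with w
      rw [Real.norm_eq_abs, abs_of_nonneg (hg_nonneg n w)]
      exact hg_le n w
    · filter_upwards with w
      exact hg_tendsto w
  exact tendsto_nhds_unique hdct hgint_tendsto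
end
-- limit lemma: aₙ = 2(1 - ML(-(tₙ² c)/2))/tₙ² → c/Γ(β+1)
lemma ml_limit {β c : ℝ} (hβ0 : 0 < β) (hc : 0 ≤ c) :
    Tendsto (fun n : ℕ => 2 * (1 - mittagLeffler β (-((1/(n+1:ℝ))^2 * c)/2)) / (1/(n+1:ℝ))^2)
      atTop (nhds (c / Real.Gamma (β+1))) := by
  set t : ℕ → ℝ := fun n => 1/(n+1:ℝ) with ht
  have htpos : ∀ n, 0 < t n := fun n => by positivity
  have ht0 : Tendsto t atTop (nhds 0) := tendsto_one_div_add_atTop_nhds_zero_nat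
  have key : ∀ n : ℕ, |(t n)^2 * c / 2| ≤ 1/2 →
      |2 * (1 - mittagLeffler β (-((t n)^2 * c)/2)) / (t n)^2 - c / Real.Gamma (β+1)|
        ≤ Real.exp 3 * c^2 * (t n)^2 := by
    intro n hsmall
    set s := (t n)^2 * c / 2 with hs
    have hb := ml_bound hβ0 (x := -s) (by rwa [abs_neg])
    have htn2 : (0:ℝ) < (t n)^2 := by positivity
    have heq : 2 * (1 - mittagLeffler β (-s)) / (t n)^2 - c / Real.Gamma (β+1)
        = -(2 / (t n)^2) * (mittagLeffler β (-s) - (1 + (-s) / Real.Gamma (β+1))) := by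
      rw [hs]
      field_simp [(htpos n).ne']
      ring
    rw [show -((t n)^2 * c)/2 = -s by rw [hs]; ring, heq, abs_mul, abs_neg]
    rw [abs_of_pos (by positivity : (0:ℝ) < 2/(t n)^2)]
    calc 2/(t n)^2 * |mittagLeffler β (-s) - (1 + (-s) / Real.Gamma (β+1))|
        ≤ 2/(t n)^2 * (2 * Real.exp 3 * (-s)^2) := by
          apply mul_le_mul_of_nonneg_left hb (by positivity)
      _ = Real.exp 3 * c^2 * (t n)^2 := by
          rw [hs]; field_simp
  -- squeeze
  have hbnd : Tendsto (fun n => Real.exp 3 * c^2 * (t n)^2) atTop (nhds 0) := by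
    have h1 : Tendsto (fun n => (t n)^2) atTop (nhds 0) := by
      simpa using (ht0.pow 2)
    simpa using (h1.const_mul (Real.exp 3 * c^2))
  have hsmall_ev : ∀ᶠ n in atTop, |(t n)^2 * c / 2| ≤ 1/2 := by
    have : Tendsto (fun n => |(t n)^2 * c / 2|) atTop (nhds 0) := by
      have h1 : Tendsto (fun n => (t n)^2 * c / 2) atTop (nhds 0) := by
        simpa using ((ht0.pow 2).mul_const c).div_const 2
      simpa using h1.abs
    exact this.eventually_le_const (by norm_num : (0:ℝ) < 1/2)
  rw [tendsto_iff_norm_sub_tendsto_zero]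
  apply squeeze_zero' (Filter.Eventually.of_forall fun n => norm_nonneg _) ?_ hbnd
  filter_upwards [hsmall_ev] with n hn
  rw [Real.norm_eq_abs]
  exact key n hn

/-- If `μ` is a Borel probability measure on `S'_d` whose characteristic functional is
`φ ↦ E_β(-|φ|₀²/2)` with `0 < β ≤ 1`, then for all `φ, ψ ∈ S_d` the second mixed moment
exists and `∫ ⟨w, φ⟩₀ ⟨w, ψ⟩₀ dμ(w) = ⟨φ, ψ⟩₀ / Γ(β + 1)`. -/
theorem grey_noise_covariance (d : ℕ) (β : ℝ) (hβ0 : 0 < β) (hβ1 : β ≤ 1)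
    (μ : Measure (Fin d → (SchwartzMap ℝ ℝ →L[ℝ] ℝ))) [IsProbabilityMeasure μ]
    (hchar : ∀ φ : Fin d → SchwartzMap ℝ ℝ,
      ∫ w, Complex.exp (Complex.I * (pairing w φ)) ∂μ
        = (mittagLeffler β (-(innerL2 φ φ) / 2) : ℂ))
    (φ ψ : Fin d → SchwartzMap ℝ ℝ) :
    Integrable (fun w => pairing w φ * pairing w ψ) μ ∧
    ∫ w, pairing w φ * pairing w ψ ∂μ = (1 / Real.Gamma (β + 1)) * innerL2 φ ψ 
    := by
  classical
  -- characteristic function / cosine identity for any test tuple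
  have Γpos : 0 < Real.Gamma (β+1) := Real.Gamma_pos_of_pos (by linarith)
  have cos_id : ∀ (χ : Fin d → SchwartzMap ℝ ℝ) (t : ℝ),
      ∫ w, Real.cos (t * pairing w χ) ∂μ
        = mittagLeffler β (-(t^2 * innerL2 χ χ)/2) := by
    intro χ t
    have hχ := hchar (fun k => t • χ k)
    have h1 : ∀ w, pairing w (fun k => t • χ k) = t * pairing w χ := fun w => pairing_smul w χ t
    have h2 : innerL2 (fun k => t • χ k) (fun k => t • χ k) = t^2 * innerL2 χ χ :=
      innerL2_smul χ t
    rw [h2] at hχ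
    have hmeas : Measurable (fun w => pairing w χ) := pairing_meas χ
    have hint : Integrable (fun w => Complex.exp (Complex.I * (pairing w (fun k => t • χ k)))) μ := by
      apply Integrable.mono' (integrable_const 1)
      · apply Measurable.aestronglyMeasurable
        apply Complex.measurable_exp.comp
        apply Measurable.const_mul
        apply Complex.measurable_ofReal.comp
        simp only [h1]
        exact (hmeas.const_mul t)
      · filter_upwards with w
        rw [
          show Complex.I * ((pairing w (fun k => t • χ k)) : ℂ)
            = ((pairing w (fun k => t • χ k)) : ℝ) * Complex.I by ring]
        rw [Complex.norm_exp_ofReal_mul_I]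
    have hre := integral_re hint
    rw [hχ] at hre
    simp only [RCLike.re_to_complex, Complex.ofReal_re] at hre
    rw [← hre]
    apply integral_congr_ae
    filter_upwards with w
    rw [h1 w, show Complex.I * ((t * pairing w χ : ℝ) : ℂ)
      = ((t * pairing w χ : ℝ) : ℂ) * Complex.I by ring]
    rw [Complex.exp_ofReal_mul_I_re]
  -- second moment for a single test tuple
  have sm : ∀ χ : Fin d → SchwartzMap ℝ ℝ,
      Integrable (fun w => (pairing w χ)^2) μ ∧
      ∫ w, (pairing w χ)^2 ∂μ = innerL2 χ χ / Real.Gamma (β+1) := by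
    intro χ
    have hc := innerL2_nonneg χ
    apply second_moment_aux μ (fun w => pairing w χ) (pairing_meas χ)
      (innerL2 χ χ / Real.Gamma (β+1)) (div_nonneg hc Γpos.le)
    have hlim := ml_limit (c := innerL2 χ χ) hβ0 hc
    apply Tendsto.congr _ hlim
    intro n
    congr 1
    congr 1
    congr 1
    rw [cos_id χ (1/(n+1:ℝ))]
  obtain ⟨hφint, hφval⟩ := sm φ
  obtain ⟨hψint, hψval⟩ := sm ψ
  obtain ⟨hsint, hsval⟩ := sm (fun k => φ k + ψ k)
  have hXmeas := pairing_meas (d := d) φ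
  have hYmeas := pairing_meas (d := d) ψ
  have hXY_int : Integrable (fun w => pairing w φ * pairing w ψ) μ := by
    apply Integrable.mono' ((hφint.add hψint).div_const 2)
      (hXmeas.mul hYmeas).aestronglyMeasurable
    filter_upwards with w
    rw [Real.norm_eq_abs, Pi.mul_apply, abs_mul]
    simp only [Pi.add_apply]
    nlinarith [sq_nonneg (|pairing w φ| - |pairing w ψ|), sq_abs (pairing w φ),
      sq_abs (pairing w ψ), abs_nonneg (pairing w φ), abs_nonneg (pairing w ψ)]
  refine ⟨hXY_int, ?_⟩
  have hpt : ∀ w, pairing w φ * pairing w ψ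
      = ((pairing w (fun k => φ k + ψ k))^2 - (pairing w φ)^2 - (pairing w ψ)^2)/2 := by
    intro w
    rw [pairing_add]
    ring
  rw [integral_congr_ae (Filter.Eventually.of_forall hpt)]
  have hsub1 : Integrable (fun w => (pairing w fun k => φ k + ψ k)^2 - pairing w φ^2) μ :=
    hsint.sub hφint
  rw [integral_div, integral_sub hsub1 hψint, integral_sub hsint hφint]
  rw [hφval, hψval, hsval, innerL2_polar]
  field_simp
  ring
end
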